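/- Let I be a tall ideal on ω which, as a partial order under inclusion, is σ-pseudobounded. Then [ω₁]^{<ω} (finite subsets of ω₁ ordered by inclusion) is not Tukey reducible to (I, ⊆). -/

import Mathlib

/-- If `I` is a tall ideal on `ω` which is σ-pseudobounded under `⊆`, then
`[ω₁]^{<ω}` (finite subsets of a set of size `ℵ₁`, ordered by inclusion) is not Tukey
reducible to `(I, ⊆)`: there is no map sending unbounded families of finite sets to
families unbounded in `I`. -/
theorem finsets_omega1_not_tukey_below (I : Set (Set ℕ))
    (hfin : ∀ A : Set ℕ, A.Finite → A ∈ I)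
    (hdown : ∀ A ∈ I, ∀ B : Set ℕ, B ⊆ A → B ∈ I)
    (hunion : ∀ A ∈ I, ∀ B ∈ I, A ∪ B ∈ I)
    (htall : ∀ A : Set ℕ, A.Infinite → ∃ B ⊆ A, B.Infinite ∧ B ∈ I)
    (hσ : ∃ X : ℕ → Set (Set ℕ), I = ⋃ n, X n ∧
      ∀ n, ∀ Y ⊆ X n, Y.Infinite →
        ∃ Z ⊆ Y, Z.Infinite ∧ ∃ b ∈ I, ∀ A ∈ Z, A ⊆ b)
    (W : Type) (hW : Cardinal.mk W = Cardinal.aleph 1) :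
    ¬ ∃ f : Finset W → Set ℕ, (∀ s : Finset W, f s ∈ I) ∧
      ∀ S : Set (Finset W), (¬ ∃ b : Finset W, ∀ s ∈ S, s ⊆ b) →
        ¬ ∃ b ∈ I, ∀ s ∈ S, f s ⊆ b := by
  rintro ⟨f, hfI, hT⟩
  obtain ⟨X, hXeq, hXb⟩ := hσ
  have hmem : ∀ w : W, ∃ n, f {w} ∈ X n := by
    intro w
    have := hfI {w}
    rw [hXeq] at this
    simpa using this
  choose g hg using hmem
  have hWuncount : ¬ Countable W := by
    intro h
    have : Cardinal.mk W ≤ Cardinal.aleph0 := @Cardinal.mk_le_aleph0 W h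
    rw [hW] at this
    exact absurd this (not_le.mpr Cardinal.aleph0_lt_aleph_one)
  have hfib : ∃ n, (g ⁻¹' {n}).Infinite := by
    by_contra h
    push_neg at h
    have huniv : (Set.univ : Set W) = ⋃ n, g ⁻¹' {n} := by
      ext w; simp
    have hcount : (Set.univ : Set W).Countable := by
      rw [huniv]
      exact Set.countable_iUnion fun n => (h n).countable
    exact hWuncount (Set.countable_univ_iff.mp hcount)
  obtain ⟨n, hTinf⟩ := hfib
  set T := g ⁻¹' {n} with hTdef
  have hTX : ∀ w ∈ T, f {w} ∈ X n := fun w hw => by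
    have hgw : g w = n := hw
    rw [← hgw]; exact hg w
  have key : ∃ b ∈ I, ∃ T' : Set W, T'.Infinite ∧ ∀ w ∈ T', f {w} ⊆ b := by
    by_cases him : ((fun w => f ({w} : Finset W)) '' T).Infinite
    · obtain ⟨Z, hZsub, hZinf, b, hbI, hbd⟩ :=
        hXb n _ (by rintro A ⟨w, hw, rfl⟩; exact hTX w hw) him
      refine ⟨b, hbI, {w ∈ T | f {w} ∈ Z}, ?_, fun w hw => hbd _ hw.2⟩
      intro hfin
      apply hZinf
      apply Set.Finite.subset (hfin.image (fun w => f ({w} : Finset W)))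
      rintro A hA
      obtain ⟨w, hw, rfl⟩ := hZsub hA
      exact ⟨w, ⟨hw, hA⟩, rfl⟩
    · rw [Set.not_infinite] at him
      have hex : ∃ A ∈ (fun w => f ({w} : Finset W)) '' T,
          {w ∈ T | f {w} = A}.Infinite := by
        by_contra h
        push_neg at h
        apply hTinf
        have hsub : T ⊆ ⋃ A ∈ (fun w => f ({w} : Finset W)) '' T,
            {w ∈ T | f {w} = A} := by
          intro w hw
          exact Set.mem_biUnion ⟨w, hw, rfl⟩ ⟨hw, rfl⟩
        exact Set.Finite.subset (him.biUnion h) hsub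
      obtain ⟨A, hAmem, hinf⟩ := hex
      obtain ⟨w0, _, rfl⟩ := hAmem
      exact ⟨f {w0}, hfI _, _, hinf, fun w hw => hw.2.le⟩
  obtain ⟨b, hbI, T', hT'inf, hbd⟩ := key
  set S : Set (Finset W) := (fun w => ({w} : Finset W)) '' T' with hSdef
  have hSunb : ¬ ∃ c : Finset W, ∀ s ∈ S, s ⊆ c := by
    rintro ⟨c, hc⟩
    apply hT'inf
    apply Set.Finite.subset c.finite_toSet
    intro w hw
    have := hc {w} ⟨w, hw, rfl⟩
    simpa using this
  exact hT S hSunb ⟨b, hbI, by rintro s ⟨w, hw, rfl⟩; exact hbd w hw⟩
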